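/- If A − I is an M-matrix, then the spectral radius of |A⁻¹| (entrywise absolute value of A⁻¹) is strictly less than 1. -/

import Mathlib

open Matrix
open scoped NNReal ENNReal

private lemma sandwich_mul {R : Type*} [Ring R] {a b c d e f : R}
    (h1 : c * d = 1) (h2 : b * e = 1) (h3 : a * f = 1) :
    (a * b * c) * (d * e * f) = 1 := by
  have key : (a * b * c) * (d * e * f) = a * (b * (c * d) * e) * f := by noncomm_ring
  rw [key, h1, mul_one, h2, mul_one, h3]

private lemma aux_pow_nonneg {n : ℕ} {T : Matrix (Fin n) (Fin n) ℝ}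
    (hT : ∀ i j, 0 ≤ T i j) : ∀ (k : ℕ) (i j : Fin n), 0 ≤ (T ^ k) i j := by
  intro k
  induction k with
  | zero => intro i j; simp [Matrix.one_apply]; split <;> norm_num
  | succ m ih =>
    intro i j
    rw [pow_succ, Matrix.mul_apply]
    exact Finset.sum_nonneg fun l _ => mul_nonneg (ih i l) (hT l j)

section NormAux

attribute [local instance]
  Matrix.linftyOpSeminormedAddCommGroup Matrix.linftyOpNormedAddCommGroup
  Matrix.linftyOpNormedSpace Matrix.linftyOpSemiNormedRing Matrix.linftyOpNormedRing
  Matrix.linftyOpNormedAlgebra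

variable {n : ℕ}

private lemma aux_norm_le {α : Type*} [SeminormedAddCommGroup α]
    (M : Matrix (Fin n) (Fin n) α) (c : ℝ) (hc : 0 ≤ c)
    (h : ∀ i, ∑ j, ‖M i j‖ ≤ c) : ‖M‖ ≤ c := by
  rw [Matrix.linfty_opNorm_def]
  have hsup : (Finset.univ.sup fun i => ∑ j, ‖M i j‖₊) ≤ c.toNNReal := by
    refine Finset.sup_le fun i _ => ?_
    rw [← NNReal.coe_le_coe, NNReal.coe_sum, Real.coe_toNNReal _ hc]
    simpa using h i
  calc ((Finset.univ.sup fun i => ∑ j, ‖M i j‖₊ : ℝ≥0) : ℝ) ≤ (c.toNNReal : ℝ) := by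
        exact_mod_cast hsup
    _ = c := Real.coe_toNNReal _ hc

private lemma aux_row_le_norm {α : Type*} [SeminormedAddCommGroup α]
    (M : Matrix (Fin n) (Fin n) α) (i : Fin n) : ∑ j, ‖M i j‖ ≤ ‖M‖ := by
  rw [Matrix.linfty_opNorm_def]
  have hle : (∑ j, ‖M i j‖₊) ≤ Finset.univ.sup fun i => ∑ j, ‖M i j‖₊ :=
    Finset.le_sup (f := fun i => ∑ j, ‖M i j‖₊) (Finset.mem_univ i)
  calc ∑ j, ‖M i j‖ = ((∑ j, ‖M i j‖₊ : ℝ≥0) : ℝ) := by simp [NNReal.coe_sum]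
    _ ≤ _ := by exact_mod_cast hle

private lemma aux_inv (T : Matrix (Fin n) (Fin n) ℝ) (hT : ∀ i j, 0 ≤ T i j)
    (c : ℝ) (hc0 : 0 ≤ c) (hc1 : c < 1) (hrow : ∀ i, ∑ j, T i j ≤ c) :
    IsUnit (1 - T) ∧ (∀ i j, 0 ≤ (1 - T)⁻¹ i j) ∧
      (∀ i, ∑ j, (1 - T)⁻¹ i j ≤ (1 - c)⁻¹) := by
  rcases isEmpty_or_nonempty (Fin n) with he | hne
  · haveI : Subsingleton (Matrix (Fin n) (Fin n) ℝ) :=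
      ⟨fun a b => by ext i j; exact (IsEmpty.false i).elim⟩
    exact ⟨isUnit_of_subsingleton _, fun i => (IsEmpty.false i).elim,
      fun i => (IsEmpty.false i).elim⟩
  haveI : CompleteSpace (Matrix (Fin n) (Fin n) ℝ) :=
    inferInstance
  have hTnorm : ‖T‖ ≤ c := by
    refine aux_norm_le T c hc0 fun i => ?_
    calc ∑ j, ‖T i j‖ = ∑ j, T i j := by
          refine Finset.sum_congr rfl fun j _ => ?_
          rw [Real.norm_eq_abs, abs_of_nonneg (hT i j)]
      _ ≤ c := hrow i
  have hT1 : ‖T‖ < 1 := lt_of_le_of_lt hTnorm hc1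
  have hsum : Summable (fun k : ℕ => T ^ k) := summable_geometric_of_norm_lt_one hT1
  have hS : (1 - T)⁻¹ = ∑' k : ℕ, T ^ k := by
    rw [Matrix.nonsing_inv_eq_ringInverse, ← geom_series_eq_inverse T hT1]
    rfl
  have key : ∀ i j, (∑' k : ℕ, T ^ k) i j = ∑' k : ℕ, (T ^ k) i j := by
    intro i j
    let e : Matrix (Fin n) (Fin n) ℝ →ₗ[ℝ] ℝ :=
      { toFun := fun M => M i j
        map_add' := fun _ _ => rfl
        map_smul' := fun _ _ => rfl }
    exact ContinuousLinearMap.map_tsum ⟨e, e.continuous_of_finiteDimensional⟩ hsum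
  have hSnn : ∀ i j, 0 ≤ (1 - T)⁻¹ i j := by
    intro i j
    rw [hS, key i j]
    exact tsum_nonneg fun k => aux_pow_nonneg hT k i j
  refine ⟨isUnit_one_sub_of_norm_lt_one hT1, hSnn, fun i => ?_⟩
  have hpow : ∀ k : ℕ, ‖T ^ k‖ ≤ ‖T‖ ^ k := fun k => norm_pow_le T k
  have hsum1 : Summable (fun k : ℕ => ‖T‖ ^ k) :=
    summable_geometric_of_lt_one (norm_nonneg T) hT1
  have hsum2 : Summable (fun k : ℕ => ‖T ^ k‖) :=
    Summable.of_nonneg_of_le (fun _ => norm_nonneg _) hpow hsum1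
  have hnormS : ‖(1 - T)⁻¹‖ ≤ (1 - c)⁻¹ := by
    rw [hS]
    calc ‖∑' k : ℕ, T ^ k‖ ≤ ∑' k : ℕ, ‖T ^ k‖ := norm_tsum_le_tsum_norm hsum2
      _ ≤ ∑' k : ℕ, ‖T‖ ^ k := Summable.tsum_le_tsum hpow hsum2 hsum1
      _ = (1 - ‖T‖)⁻¹ := tsum_geometric_of_lt_one (norm_nonneg T) hT1
      _ ≤ (1 - c)⁻¹ := by
          apply inv_anti₀ (by linarith) (by linarith)
  calc ∑ j, (1 - T)⁻¹ i j = ∑ j, ‖(1 - T)⁻¹ i j‖ := by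
        refine Finset.sum_congr rfl fun j _ => ?_
        rw [Real.norm_eq_abs, abs_of_nonneg (hSnn i j)]
    _ ≤ ‖(1 - T)⁻¹‖ := aux_row_le_norm _ i
    _ ≤ (1 - c)⁻¹ := hnormS

private lemma aux_rad [Nonempty (Fin n)] (X : Matrix (Fin n) (Fin n) ℂ)
    (u : (Matrix (Fin n) (Fin n) ℂ)ˣ) (P : Matrix (Fin n) (Fin n) ℝ)
    (hP : ∀ i j, 0 ≤ P i j)
    (hconj : P.map (algebraMap ℝ ℂ) = (u⁻¹).val * X * u.val)
    (c : ℝ) (hc : c < 1) (h : ∀ i, ∑ j, P i j ≤ c) :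
    spectralRadius ℂ X < 1 := by
  set M : Matrix (Fin n) (Fin n) ℂ := P.map (algebraMap ℝ ℂ) with hM
  have hc0 : 0 ≤ c := by
    obtain ⟨i⟩ := (inferInstance : Nonempty (Fin n))
    exact le_trans (Finset.sum_nonneg fun j _ => hP i j) (h i)
  have hspec : spectrum ℂ M = spectrum ℂ X := by
    rw [hconj]; exact spectrum.units_conjugate'
  have h1 : spectralRadius ℂ X = spectralRadius ℂ M := by
    simp only [spectralRadius, hspec]
  have h3 : ‖M‖ ≤ c := by
    refine aux_norm_le M c hc0 fun i => ?_
    calc ∑ j, ‖M i j‖ = ∑ j, P i j := by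
          refine Finset.sum_congr rfl fun j _ => ?_
          simp [hM, Matrix.map_apply, Complex.norm_real, Real.norm_eq_abs,
            abs_of_nonneg (hP i j)]
      _ ≤ c := h i
  have h4 : ‖M‖₊ < 1 := by
    rw [← NNReal.coe_lt_coe]
    push_cast
    calc ‖M‖ ≤ c := h3
      _ < 1 := hc
  calc spectralRadius ℂ X = spectralRadius ℂ M := h1
    _ ≤ ‖M‖₊ := spectrum.spectralRadius_le_nnnorm M
    _ < 1 := by exact_mod_cast h4

end NormAux


def IsZMatrix {n : ℕ} (A : Matrix (Fin n) (Fin n) ℝ) : Prop :=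
  ∀ i j, i ≠ j → A i j ≤ 0

/-- An M-matrix: a Z-matrix that is invertible with entrywise nonnegative inverse. -/
def IsMMatrix {n : ℕ} (A : Matrix (Fin n) (Fin n) ℝ) : Prop :=
  IsZMatrix A ∧ IsUnit A ∧ ∀ i j, 0 ≤ A⁻¹ i j

/-- D(x) = diag(sign(x)). -/
noncomputable def signD {n : ℕ} (x : Fin n → ℝ) : Matrix (Fin n) (Fin n) ℝ :=
  Matrix.diagonal (fun i => Real.sign (x i))

/-- Componentwise absolute value. -/
def absVec {n : ℕ} (x : Fin n → ℝ) : Fin n → ℝ := fun i => |x i|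

/-- Spectral (operator 2-) norm of a matrix. -/
noncomputable def specNorm {n : ℕ} (A : Matrix (Fin n) (Fin n) ℝ) : ℝ :=
  ‖Matrix.toEuclideanCLM (𝕜 := ℝ) A‖

theorem stmt_18 {n : ℕ} (A : Matrix (Fin n) (Fin n) ℝ)
    (h : IsMMatrix (A - 1)) :
    spectralRadius ℂ ((A⁻¹).map (fun t => ((|t| : ℝ) : ℂ))) < 1 := by
  obtain ⟨hZ, hU, hB⟩ := h
  rcases Nat.eq_zero_or_pos n with hn | hn
  · subst hn
    haveI : Subsingleton (Matrix (Fin 0) (Fin 0) ℂ) :=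
      ⟨fun a b => by ext i j; exact i.elim0⟩
    have hempty : spectrum ℂ ((A⁻¹).map (fun t => ((|t| : ℝ) : ℂ))) = ∅ := by
      ext k
      simp only [Set.mem_empty_iff_false, iff_false]
      intro hk
      exact (spectrum.mem_iff.mp hk) (isUnit_of_subsingleton _)
    have h0 : spectralRadius ℂ ((A⁻¹).map (fun t => ((|t| : ℝ) : ℂ))) = 0 := by
      simp [spectralRadius, hempty]
    rw [h0]
    exact zero_lt_one
  haveI : Nonempty (Fin n) := Fin.pos_iff_nonempty.mp hn
  set B : Matrix (Fin n) (Fin n) ℝ := (A - 1)⁻¹ with hBdef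
  have hdet : IsUnit (A - 1).det := (Matrix.isUnit_iff_isUnit_det _).mp hU
  have hAB : (A - 1) * B = 1 := Matrix.mul_nonsing_inv _ hdet
  have hBA : B * (A - 1) = 1 := Matrix.nonsing_inv_mul _ hdet
  set w : Fin n → ℝ := fun i => ∑ j, B i j with hwdef
  have hw : ∀ i, 0 < w i := by
    intro i
    rcases lt_or_eq_of_le (Finset.sum_nonneg fun j (_ : j ∈ Finset.univ) => hB i j) with hlt | heq
    · exact hlt
    exfalso
    have hzero : ∀ j ∈ Finset.univ, B i j = 0 :=
      (Finset.sum_eq_zero_iff_of_nonneg (fun j _ => hB i j)).mp heq.symm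
    have h1 : (B * (A - 1)) i i = 0 := by
      rw [Matrix.mul_apply]
      exact Finset.sum_eq_zero fun j hj => by rw [hzero j hj, zero_mul]
    rw [hBA] at h1
    simp [Matrix.one_apply] at h1
  have hABplus : A * B = 1 + B := by
    have h2 := hAB
    rw [sub_mul, one_mul, sub_eq_iff_eq_add] at h2
    exact h2
  have hAw : ∀ i, ∑ j, A i j * w j = 1 + w i := by
    intro i
    calc ∑ j, A i j * w j = ∑ j, ∑ k, A i j * B j k := by
          simp only [hwdef, Finset.mul_sum]
      _ = ∑ k, ∑ j, A i j * B j k := Finset.sum_comm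
      _ = ∑ k, (A * B) i k := by simp [Matrix.mul_apply]
      _ = ∑ k, ((1 : Matrix (Fin n) (Fin n) ℝ) i k + B i k) := by
          rw [hABplus]; simp [Matrix.add_apply]
      _ = 1 + w i := by
          rw [Finset.sum_add_distrib]
          simp [Matrix.one_apply, hwdef]
  obtain ⟨s, hs0, hsd⟩ : ∃ s : ℝ, 0 < s ∧ ∀ i, A i i ≤ s := by
    refine ⟨1 + ∑ i, |A i i|, ?_, fun i => ?_⟩
    · have habs : (0:ℝ) ≤ ∑ i, |A i i| := Finset.sum_nonneg fun i _ => abs_nonneg _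
      linarith
    · have h1 : |A i i| ≤ ∑ j, |A j j| :=
        Finset.single_le_sum (fun j _ => abs_nonneg (A j j)) (Finset.mem_univ i)
      have h2 := le_abs_self (A i i)
      linarith
  have hsne : s ≠ 0 := hs0.ne'
  have hAoff : ∀ i j, i ≠ j → A i j ≤ 0 := by
    intro i j hij
    have := hZ i j hij
    simpa [Matrix.sub_apply, Matrix.one_apply, hij] using this
  set N : Matrix (Fin n) (Fin n) ℝ := s • (1 : Matrix (Fin n) (Fin n) ℝ) - A with hNdef
  have hNentry : ∀ i j, N i j = s * (if i = j then 1 else 0) - A i j := by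
    intro i j
    rw [hNdef]
    simp [Matrix.sub_apply, Matrix.smul_apply, Matrix.one_apply, smul_eq_mul]
  have hN : ∀ i j, 0 ≤ N i j := by
    intro i j
    rw [hNentry]
    by_cases hij : i = j
    · subst hij; simp; linarith [hsd i]
    · simp [hij]; linarith [hAoff i j hij]
  set T : Matrix (Fin n) (Fin n) ℝ :=
    s⁻¹ • (diagonal (fun i => (w i)⁻¹) * N * diagonal w) with hTdef
  have hTentry : ∀ i j, T i j = s⁻¹ * ((w i)⁻¹ * N i j * w j) := by
    intro i j
    rw [hTdef]
    simp [Matrix.smul_apply, Matrix.diagonal_mul, Matrix.mul_diagonal, smul_eq_mul, mul_assoc]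
  have hT0 : ∀ i j, 0 ≤ T i j := by
    intro i j
    rw [hTentry]
    exact mul_nonneg (inv_nonneg.mpr hs0.le)
      (mul_nonneg (mul_nonneg (inv_nonneg.mpr (hw i).le) (hN i j)) (hw j).le)
  have hNw : ∀ i, ∑ j, N i j * w j = s * w i - (1 + w i) := by
    intro i
    have h1 : ∑ j, (s • (1 : Matrix (Fin n) (Fin n) ℝ)) i j * w j = s * w i := by
      simp [Matrix.smul_apply, Matrix.one_apply, ite_mul, smul_eq_mul, mul_ite]
    calc ∑ j, N i j * w j
        = ∑ j, ((s • (1 : Matrix (Fin n) (Fin n) ℝ)) i j * w j - A i j * w j) := by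
          rw [hNdef]; simp [Matrix.sub_apply, sub_mul]
      _ = s * w i - (1 + w i) := by
          rw [Finset.sum_sub_distrib, h1, hAw i]
  set γ : Fin n → ℝ := fun i => (1 + w i) / (s * w i) with hγdef
  have hγpos : ∀ i, 0 < γ i := fun i => div_pos (by linarith [hw i]) (mul_pos hs0 (hw i))
  have hTrow : ∀ i, ∑ j, T i j = 1 - γ i := by
    intro i
    have h1 : ∑ j, T i j = s⁻¹ * ((w i)⁻¹ * ∑ j, N i j * w j) := by
      rw [Finset.mul_sum, Finset.mul_sum]
      refine Finset.sum_congr rfl fun j _ => ?_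
      rw [hTentry]; ring
    rw [h1, hNw i, hγdef]
    field_simp [hsne, (hw i).ne']
  obtain ⟨δ, hδpos, hsinvδ, hδle⟩ :
      ∃ δ : ℝ, 0 < δ ∧ s⁻¹ < δ ∧ ∀ i, δ ≤ γ i := by
    refine ⟨Finset.univ.inf' Finset.univ_nonempty γ, ?_, ?_, ?_⟩
    · exact (Finset.lt_inf'_iff _).mpr fun i _ => hγpos i
    · refine (Finset.lt_inf'_iff _).mpr fun i _ => ?_
      rw [hγdef, lt_div_iff₀ (mul_pos hs0 (hw i))]
      have h2 : s⁻¹ * (s * w i) = w i := by field_simp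
      rw [h2]; linarith [hw i]
    · exact fun i => Finset.inf'_le _ (Finset.mem_univ i)
  have hrowc : ∀ i, ∑ j, T i j ≤ 1 - δ := fun i => by
    rw [hTrow i]; linarith [hδle i]
  have hc0 : (0:ℝ) ≤ 1 - δ := by
    obtain ⟨i0⟩ := (inferInstance : Nonempty (Fin n))
    exact le_trans (Finset.sum_nonneg fun j _ => hT0 i0 j) (hrowc i0)
  have hc1 : (1:ℝ) - δ < 1 := by linarith
  obtain ⟨hU1T, hSnn, hSrow⟩ := aux_inv T hT0 (1 - δ) hc0 hc1 hrowc
  set S : Matrix (Fin n) (Fin n) ℝ := (1 - T)⁻¹ with hSdef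
  have hSrow' : ∀ i, ∑ j, S i j ≤ δ⁻¹ := by
    intro i
    have h2 := hSrow i
    rwa [show (1:ℝ) - (1 - δ) = δ by ring] at h2
  have h1TS : (1 - T) * S = 1 :=
    Matrix.mul_nonsing_inv _ ((Matrix.isUnit_iff_isUnit_det _).mp hU1T)
  have hD'D : diagonal (fun i => (w i)⁻¹) * diagonal w = (1 : Matrix (Fin n) (Fin n) ℝ) := by
    rw [Matrix.diagonal_mul_diagonal]
    have h2 : (fun i => (w i)⁻¹ * w i) = fun _ => (1:ℝ) :=
      funext fun i => inv_mul_cancel₀ (hw i).ne'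
    rw [h2, Matrix.diagonal_one]
  have hDlDl' : diagonal (fun i => s * w i) * diagonal (fun i => (s * w i)⁻¹)
      = (1 : Matrix (Fin n) (Fin n) ℝ) := by
    rw [Matrix.diagonal_mul_diagonal]
    have h2 : (fun i => (s * w i) * (s * w i)⁻¹) = fun _ => (1:ℝ) :=
      funext fun i => mul_inv_cancel₀ (mul_pos hs0 (hw i)).ne'
    rw [h2, Matrix.diagonal_one]
  have hA : diagonal (fun i => s * w i) * (1 - T) * diagonal (fun i => (w i)⁻¹) = A := by
    ext i j
    rw [Matrix.mul_diagonal, Matrix.diagonal_mul, Matrix.sub_apply, hTentry i j, hNentry i j,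
      Matrix.one_apply]
    by_cases hij : i = j
    · subst hij
      simp only [if_pos rfl, ↓reduceIte]
      field_simp [hsne, (hw i).ne']
      ring
    · simp only [if_neg hij]
      field_simp [hsne, (hw i).ne', (hw j).ne']
      ring
  have hAR : A * (diagonal w * S * diagonal (fun i => (s * w i)⁻¹)) = 1 := by
    rw [← hA]
    exact sandwich_mul hD'D h1TS hDlDl'
  have hAinv : A⁻¹ = diagonal w * S * diagonal (fun i => (s * w i)⁻¹) :=
    Matrix.inv_eq_right_inv hAR
  have hRentry : ∀ i j, A⁻¹ i j = w i * S i j * (s * w j)⁻¹ := by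
    intro i j
    rw [hAinv, Matrix.mul_diagonal, Matrix.diagonal_mul]
  have hAinvnn : ∀ i j, 0 ≤ A⁻¹ i j := by
    intro i j
    rw [hRentry]
    exact mul_nonneg (mul_nonneg (hw i).le (hSnn i j))
      (inv_nonneg.mpr (mul_pos hs0 (hw j)).le)
  set P : Matrix (Fin n) (Fin n) ℝ := s⁻¹ • S with hPdef
  have hPentry : ∀ i j, P i j = s⁻¹ * S i j := by
    intro i j; rw [hPdef]; simp [Matrix.smul_apply, smul_eq_mul]
  have hPnn : ∀ i j, 0 ≤ P i j := by
    intro i j; rw [hPentry]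
    exact mul_nonneg (inv_nonneg.mpr hs0.le) (hSnn i j)
  have hProw : ∀ i, ∑ j, P i j ≤ s⁻¹ * δ⁻¹ := by
    intro i
    have h2 : ∑ j, P i j = s⁻¹ * ∑ j, S i j := by
      rw [Finset.mul_sum]; exact Finset.sum_congr rfl fun j _ => hPentry i j
    rw [h2]
    exact mul_le_mul_of_nonneg_left (hSrow' i) (inv_nonneg.mpr hs0.le)
  have hc2 : s⁻¹ * δ⁻¹ < 1 := by
    have hδinv : δ⁻¹ < s := by
      have h3 : δ⁻¹ < (s⁻¹)⁻¹ := inv_strictAnti₀ (inv_pos.mpr hs0) hsinvδ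
      rwa [inv_inv] at h3
    calc s⁻¹ * δ⁻¹ < s⁻¹ * s := mul_lt_mul_of_pos_left hδinv (inv_pos.mpr hs0)
      _ = 1 := inv_mul_cancel₀ hsne
  have hwC : ∀ i, (w i : ℂ) ≠ 0 := fun i => Complex.ofReal_ne_zero.mpr (hw i).ne'
  have hsC : (s : ℂ) ≠ 0 := Complex.ofReal_ne_zero.mpr hsne
  have hVval_inv : diagonal (fun i => (w i : ℂ)) * diagonal (fun i => (w i : ℂ)⁻¹)
      = (1 : Matrix (Fin n) (Fin n) ℂ) := by
    rw [Matrix.diagonal_mul_diagonal]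
    have h2 : (fun i => (w i : ℂ) * (w i : ℂ)⁻¹) = fun _ => (1:ℂ) :=
      funext fun i => mul_inv_cancel₀ (hwC i)
    rw [h2, Matrix.diagonal_one]
  have hVinv_val : diagonal (fun i => (w i : ℂ)⁻¹) * diagonal (fun i => (w i : ℂ))
      = (1 : Matrix (Fin n) (Fin n) ℂ) := by
    rw [Matrix.diagonal_mul_diagonal]
    have h2 : (fun i => (w i : ℂ)⁻¹ * (w i : ℂ)) = fun _ => (1:ℂ) :=
      funext fun i => inv_mul_cancel₀ (hwC i)
    rw [h2, Matrix.diagonal_one]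
  set V : (Matrix (Fin n) (Fin n) ℂ)ˣ :=
    ⟨diagonal (fun i => (w i : ℂ)), diagonal (fun i => (w i : ℂ)⁻¹),
      hVval_inv, hVinv_val⟩ with hVdef
  have hVinv : (V⁻¹).val = diagonal (fun i => (w i : ℂ)⁻¹) := rfl
  have hVval : V.val = diagonal (fun i => (w i : ℂ)) := rfl
  have hconj : P.map (algebraMap ℝ ℂ)
      = (V⁻¹).val * ((A⁻¹).map (fun t => ((|t| : ℝ) : ℂ))) * V.val := by
    ext i j
    rw [hVinv, hVval, Matrix.mul_diagonal, Matrix.diagonal_mul, Matrix.map_apply,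
      Matrix.map_apply, abs_of_nonneg (hAinvnn i j), hRentry i j, hPentry i j]
    have halg : algebraMap ℝ ℂ (s⁻¹ * S i j) = ((s⁻¹ * S i j : ℝ) : ℂ) := rfl
    rw [halg]
    push_cast
    field_simp [hsC, hwC i, hwC j]
  exact aux_rad _ V P hPnn hconj (s⁻¹ * δ⁻¹) hc2 hProw
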